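/- Let (M, m₀) and (Y, y₀) be pointed topological spaces and A an abelian group regarded as a discrete space. If M and Y are pointed homotopy equivalent (there exist pointed continuous maps f : M → Y and h : Y → M with h ∘ f pointed-homotopic to id_M and f ∘ h pointed-homotopic to id_Y), then Sym(M;A) and Sym(Y;A) are pointed homotopy equivalent, with Sym(f;A) and Sym(h;A) forming an inverse pair of homotopy equivalences. -/

import Mathlib

open Topology

set_option maxHeartbeats 1000000


/-- Underlying set of the infinite symmetric product: finitely supported
labelings of `M` by `A` vanishing at the basepoint `m₀`. -/
def SymProd (M : Type) (A : Type) [AddCommGroup A] (m₀ : M) : Type := {l : M →₀ A // l m₀ = 0}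

/-- The structure maps `Mⁿ × Aⁿ → SymProd(M;A)`. -/
noncomputable def symF (M : Type) (A : Type) [AddCommGroup A] (m₀ : M) (n : ℕ)
    (c : Fin n → M) (a : Fin n → A) : SymProd M A m₀ :=
  ⟨(∑ i, Finsupp.single (c i) (a i)) - Finsupp.single m₀ ((∑ i, Finsupp.single (c i) (a i)) m₀),
    by simp⟩

/-- The topology on `SymProd(M;A)`: the finest topology making all structure maps
continuous, where `Mⁿ` has the product topology and `Aⁿ` the product of discrete
topologies. -/
noncomputable instance symTop (M : Type) [TopologicalSpace M] (A : Type) [AddCommGroup A]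
    (m₀ : M) : TopologicalSpace (SymProd M A m₀) :=
  ⨆ n : ℕ, TopologicalSpace.coinduced
    (fun p : (Fin n → M) × (Fin n → A) => symF M A m₀ n p.1 p.2)
    (@instTopologicalSpaceProd _ _ inferInstance
      (@Pi.topologicalSpace (Fin n) (fun _ => A) (fun _ => ⊥)))

/-- The basepoint of `SymProd(M;A)`: the zero labeling. -/
def symZero (M : Type) (A : Type) [AddCommGroup A] (m₀ : M) : SymProd M A m₀ := ⟨0, by simp⟩

/-- The pushforward `SymProd(f;A)` of a pointed map `f`. -/
noncomputable def symMap {M Y : Type} (A : Type) [AddCommGroup A] (f : M → Y)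
    (m₀ : M) (y₀ : Y) (l : SymProd M A m₀) : SymProd Y A y₀ :=
  ⟨Finsupp.mapDomain f l.1 - Finsupp.single y₀ (Finsupp.mapDomain f l.1 y₀), by simp⟩

/-- Pointed homotopy of pointed maps. -/
def PtdHomotopic {X Y : Type} [TopologicalSpace X] [TopologicalSpace Y]
    (x₀ : X) (y₀ : Y) (f g : X → Y) : Prop :=
  ∃ H : X × unitInterval → Y, Continuous H ∧ (∀ x, H (x, 0) = f x) ∧ (∀ x, H (x, 1) = g x) ∧
    ∀ t, H (x₀, t) = y₀

/-! ### Auxiliary algebraic lemmas -/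

theorem symAux_mapDomain_sub {M Y A : Type} [AddCommGroup A] (f : M → Y) (u v : M →₀ A) :
    Finsupp.mapDomain f (u - v) = Finsupp.mapDomain f u - Finsupp.mapDomain f v := by
  simpa [Finsupp.mapDomain.addMonoidHom_apply] using
    map_sub (Finsupp.mapDomain.addMonoidHom f) u v

theorem symMap_symF {M Y : Type} (A : Type) [AddCommGroup A] (f : M → Y) (m₀ : M) (y₀ : Y)
    (hf₀ : f m₀ = y₀) (n : ℕ) (c : Fin n → M) (a : Fin n → A) :
    symMap A f m₀ y₀ (symF M A m₀ n c a) = symF Y A y₀ n (f ∘ c) a := by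
  apply Subtype.ext
  simp only [symMap, symF, Function.comp]
  set S : M →₀ A := ∑ i, Finsupp.single (c i) (a i) with hS
  set T : Y →₀ A := ∑ i, Finsupp.single (f (c i)) (a i) with hT
  have h1 : Finsupp.mapDomain f S = T := by
    rw [hS, hT, Finsupp.mapDomain_finset_sum]
    simp [Finsupp.mapDomain_single]
  rw [symAux_mapDomain_sub, h1, Finsupp.mapDomain_single, hf₀]
  simp only [Finsupp.sub_apply, Finsupp.single_eq_same, Finsupp.single_sub]
  abel

theorem symMap_comp {M Y Z : Type} (A : Type) [AddCommGroup A] (f : M → Y) (g : Y → Z)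
    (m₀ : M) (y₀ : Y) (z₀ : Z) (hg₀ : g y₀ = z₀) (l : SymProd M A m₀) :
    symMap A g y₀ z₀ (symMap A f m₀ y₀ l) = symMap A (g ∘ f) m₀ z₀ l := by
  apply Subtype.ext
  simp only [symMap]
  rw [symAux_mapDomain_sub, Finsupp.mapDomain_single, hg₀, ← Finsupp.mapDomain_comp]
  simp only [Finsupp.sub_apply, Finsupp.single_eq_same, Finsupp.single_sub]
  abel

theorem symMap_id {M : Type} (A : Type) [AddCommGroup A] (m₀ : M) (l : SymProd M A m₀) :
    symMap A id m₀ m₀ l = l := by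
  apply Subtype.ext
  simp [symMap, Finsupp.mapDomain_id, l.2]

theorem symMap_zero {M Y : Type} (A : Type) [AddCommGroup A] (f : M → Y) (m₀ : M) (y₀ : Y) :
    symMap A f m₀ y₀ (symZero M A m₀) = symZero Y A y₀ := by
  apply Subtype.ext
  simp [symMap, symZero]

theorem exists_symF_eq {M A : Type} [AddCommGroup A] {m₀ : M} (l : SymProd M A m₀) :
    ∃ p : Σ n : ℕ, (Fin n → M) × (Fin n → A), symF M A m₀ p.1 p.2.1 p.2.2 = l := by
  classical
  obtain ⟨l, hl⟩ := l
  set s := l.support with hs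
  refine ⟨⟨s.card, fun i => (s.equivFin.symm i : M), fun i => l (s.equivFin.symm i : M)⟩, ?_⟩
  apply Subtype.ext
  show (∑ i, Finsupp.single _ _) - _ = l
  have hsum : (∑ i : Fin s.card,
      Finsupp.single ((s.equivFin.symm i : M)) (l (s.equivFin.symm i : M))) = l := by
    rw [Equiv.sum_comp s.equivFin.symm (fun x : s => Finsupp.single (x : M) (l (x : M)))]
    rw [Finset.sum_coe_sort s (fun x => Finsupp.single x (l x))]
    exact Finsupp.sum_single l
  rw [hsum, hl, Finsupp.single_zero, sub_zero]

/-! ### Topological lemmas.  We carry around an arbitrary topology on `A` together with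
the hypothesis that it is the discrete (bottom) topology, so that statements can use
instance inference while matching the explicit `⊥` in `symTop`. -/

theorem continuous_symF_struct {M : Type} [TopologicalSpace M] {A : Type} [AddCommGroup A]
    [tA : TopologicalSpace A] (hbot : tA = ⊥) (m₀ : M) (n : ℕ) :
    Continuous (fun p : (Fin n → M) × (Fin n → A) => symF M A m₀ n p.1 p.2) := by
  subst hbot
  letI : TopologicalSpace A := ⊥
  exact continuous_iSup_rng (i := n) continuous_coinduced_rng

theorem continuous_symProd_dom {M : Type} [TopologicalSpace M] {A : Type} [AddCommGroup A]
    [tA : TopologicalSpace A] (hbot : tA = ⊥) (m₀ : M) {Z : Type} [TopologicalSpace Z]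
    (g : SymProd M A m₀ → Z)
    (hg : ∀ n : ℕ, Continuous fun p : (Fin n → M) × (Fin n → A) => g (symF M A m₀ n p.1 p.2)) :
    Continuous g := by
  subst hbot
  letI : TopologicalSpace A := ⊥
  have : Continuous[(⨆ n : ℕ, TopologicalSpace.coinduced
      (fun p : (Fin n → M) × (Fin n → A) => symF M A m₀ n p.1 p.2)
      (@instTopologicalSpaceProd _ _ inferInstance
        (@Pi.topologicalSpace (Fin n) (fun _ => A) (fun _ => ⊥)))), _] g := by
    rw [continuous_iSup_dom]
    intro n
    rw [continuous_coinduced_dom]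
    exact hg n
  exact this

theorem isQuotientMap_symQ {M : Type} [TopologicalSpace M] {A : Type} [AddCommGroup A]
    [tA : TopologicalSpace A] (hbot : tA = ⊥) (m₀ : M) :
    Topology.IsQuotientMap
      (fun p : Σ n : ℕ, (Fin n → M) × (Fin n → A) => symF M A m₀ p.1 p.2.1 p.2.2) := by
  subst hbot
  letI : TopologicalSpace A := ⊥
  rw [Topology.isQuotientMap_iff, and_comm, Topology.isCoinducing_iff]
  constructor
  · intro l
    obtain ⟨p, hp⟩ := exists_symF_eq l
    exact ⟨p, hp⟩
  · intro s
    have h1 : IsOpen s ↔ ∀ n : ℕ,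
        IsOpen ((fun p : (Fin n → M) × (Fin n → A) => symF M A m₀ n p.1 p.2) ⁻¹' s) := by
      constructor
      · intro hs n
        exact (continuous_symF_struct rfl m₀ n).isOpen_preimage s hs
      · intro hall
        rw [show (IsOpen s) = IsOpen[(⨆ n : ℕ, TopologicalSpace.coinduced
            (fun p : (Fin n → M) × (Fin n → A) => symF M A m₀ n p.1 p.2)
            (@instTopologicalSpaceProd _ _ inferInstance
              (@Pi.topologicalSpace (Fin n) (fun _ => A) (fun _ => ⊥))))] s from rfl,
          isOpen_iSup_iff]
        intro n
        rw [isOpen_coinduced]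
        exact hall n
    rw [h1, isOpen_sigma_iff]
    constructor
    · intro hall n
      exact hall n
    · intro hall n
      exact hall n

theorem continuous_symMap {M Y : Type} [TopologicalSpace M] [TopologicalSpace Y]
    {A : Type} [AddCommGroup A] [tA : TopologicalSpace A] (hbot : tA = ⊥)
    (f : M → Y) (m₀ : M) (y₀ : Y) (hf : Continuous f) (hf₀ : f m₀ = y₀) :
    Continuous (symMap A f m₀ y₀) := by
  apply continuous_symProd_dom hbot m₀
  intro n
  have e : (fun p : (Fin n → M) × (Fin n → A) => symMap A f m₀ y₀ (symF M A m₀ n p.1 p.2))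
      = fun p => symF Y A y₀ n (f ∘ p.1) p.2 := by
    funext p
    exact symMap_symF A f m₀ y₀ hf₀ n p.1 p.2
  rw [e]
  exact (continuous_symF_struct hbot y₀ n).comp
    (Continuous.prodMk
      (continuous_pi fun i => hf.comp ((continuous_apply i).comp continuous_fst))
      continuous_snd)

theorem ptdHomotopic_symMap {M : Type} [TopologicalSpace M] {A : Type} [AddCommGroup A]
    [tA : TopologicalSpace A] (hbot : tA = ⊥) (m₀ : M) (k₁ k₂ : M → M)
    (hk : PtdHomotopic m₀ m₀ k₁ k₂) :
    PtdHomotopic (symZero M A m₀) (symZero M A m₀)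
      (symMap A k₁ m₀ m₀) (symMap A k₂ m₀ m₀) := by
  obtain ⟨H, Hc, H0, H1, Hpt⟩ := hk
  refine ⟨fun q => symMap A (fun x => H (x, q.2)) m₀ m₀ q.1, ?_, ?_, ?_, ?_⟩
  · -- continuity of the induced homotopy
    apply (isQuotientMap_symQ hbot m₀).continuous_lift_prod_left
    -- reduce to each sigma component using the distributivity homeomorphism
    have key : ∀ n : ℕ, Continuous fun q : ((Fin n → M) × (Fin n → A)) × unitInterval =>
        symMap A (fun x => H (x, q.2)) m₀ m₀ (symF M A m₀ n q.1.1 q.1.2) := by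
      intro n
      have e : (fun q : ((Fin n → M) × (Fin n → A)) × unitInterval =>
          symMap A (fun x => H (x, q.2)) m₀ m₀ (symF M A m₀ n q.1.1 q.1.2))
          = fun q => symF M A m₀ n (fun i => H (q.1.1 i, q.2)) q.1.2 := by
        funext q
        exact symMap_symF A (fun x => H (x, q.2)) m₀ m₀ (Hpt q.2) n q.1.1 q.1.2
      rw [e]
      exact (continuous_symF_struct hbot m₀ n).comp
        (Continuous.prodMk
          (continuous_pi fun i => Hc.comp
            (Continuous.prodMk ((continuous_apply i).comp (continuous_fst.comp continuous_fst))
              continuous_snd))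
          (continuous_snd.comp continuous_fst))
    have hG' : Continuous fun p : Σ n : ℕ, ((Fin n → M) × (Fin n → A)) × unitInterval =>
        symMap A (fun x => H (x, p.2.2)) m₀ m₀ (symF M A m₀ p.1 p.2.1.1 p.2.1.2) := by
      apply continuous_sigma
      intro n
      exact key n
    have e2 : (fun p : (Σ n : ℕ, (Fin n → M) × (Fin n → A)) × unitInterval =>
        symMap A (fun x => H (x, p.2)) m₀ m₀ (symF M A m₀ p.1.1 p.1.2.1 p.1.2.2))
        = (fun p : Σ n : ℕ, ((Fin n → M) × (Fin n → A)) × unitInterval =>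
            symMap A (fun x => H (x, p.2.2)) m₀ m₀ (symF M A m₀ p.1 p.2.1.1 p.2.1.2))
          ∘ (Homeomorph.sigmaProdDistrib :
              (Σ n : ℕ, (Fin n → M) × (Fin n → A)) × unitInterval ≃ₜ
                Σ n : ℕ, ((Fin n → M) × (Fin n → A)) × unitInterval) := by
      funext p
      obtain ⟨⟨n, x⟩, t⟩ := p
      rfl
    show Continuous fun p : (Σ n : ℕ, (Fin n → M) × (Fin n → A)) × unitInterval =>
        symMap A (fun x => H (x, p.2)) m₀ m₀ (symF M A m₀ p.1.1 p.1.2.1 p.1.2.2)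
    rw [e2]
    exact hG'.comp (Homeomorph.continuous _)
  · intro l
    show symMap A (fun x => H (x, 0)) m₀ m₀ l = symMap A k₁ m₀ m₀ l
    rw [show (fun x => H (x, 0)) = k₁ from funext H0]
  · intro l
    show symMap A (fun x => H (x, 1)) m₀ m₀ l = symMap A k₂ m₀ m₀ l
    rw [show (fun x => H (x, 1)) = k₂ from funext H1]
  · intro t
    exact symMap_zero A _ m₀ m₀

/-- If `(M,m₀)` and `(Y,y₀)` are pointed homotopy equivalent via an
inverse pair `f : M → Y`, `h : Y → M`, then `Sym(M;A)` and `Sym(Y;A)` are pointed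
homotopy equivalent, with `Sym(f;A)` and `Sym(h;A)` forming an inverse pair of
homotopy equivalences. -/
theorem symProd_homotopy_equivalence
    (M Y : Type) [TopologicalSpace M] [TopologicalSpace Y]
    (A : Type) [AddCommGroup A] (m₀ : M) (y₀ : Y)
    (f : M → Y) (h : Y → M) (hf : Continuous f) (hh : Continuous h)
    (hf₀ : f m₀ = y₀) (hh₀ : h y₀ = m₀)
    (hfh : PtdHomotopic m₀ m₀ (h ∘ f) id) (hhf : PtdHomotopic y₀ y₀ (f ∘ h) id) :
    Continuous (symMap A f m₀ y₀) ∧ Continuous (symMap A h y₀ m₀) ∧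
    symMap A f m₀ y₀ (symZero M A m₀) = symZero Y A y₀ ∧
    symMap A h y₀ m₀ (symZero Y A y₀) = symZero M A m₀ ∧
    PtdHomotopic (symZero M A m₀) (symZero M A m₀)
      (symMap A h y₀ m₀ ∘ symMap A f m₀ y₀) id ∧
    PtdHomotopic (symZero Y A y₀) (symZero Y A y₀)
      (symMap A f m₀ y₀ ∘ symMap A h y₀ m₀) id := by
  letI tA : TopologicalSpace A := ⊥
  have e1 : symMap A h y₀ m₀ ∘ symMap A f m₀ y₀ = symMap A (h ∘ f) m₀ m₀ :=
    funext fun l => symMap_comp A f h m₀ y₀ m₀ hh₀ l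
  have e2 : symMap A f m₀ y₀ ∘ symMap A h y₀ m₀ = symMap A (f ∘ h) y₀ y₀ :=
    funext fun l => symMap_comp A h f y₀ m₀ y₀ hf₀ l
  have e3 : (id : SymProd M A m₀ → SymProd M A m₀) = symMap A id m₀ m₀ :=
    funext fun l => (symMap_id A m₀ l).symm
  have e4 : (id : SymProd Y A y₀ → SymProd Y A y₀) = symMap A id y₀ y₀ :=
    funext fun l => (symMap_id A y₀ l).symm
  refine ⟨continuous_symMap rfl f m₀ y₀ hf hf₀, continuous_symMap rfl h y₀ m₀ hh hh₀,
    symMap_zero A f m₀ y₀, symMap_zero A h y₀ m₀, ?_, ?_⟩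
  · rw [e1, e3]
    exact ptdHomotopic_symMap rfl m₀ (h ∘ f) id hfh
  · rw [e2, e4]
    exact ptdHomotopic_symMap rfl y₀ (f ∘ h) id hhf
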